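/- Let q ≥ 1 be an integer, γ ∈ (0,1) and β > 1, and set α_n := 1 − γ/n^β. Then lim_{n→∞} n^{β−1} · (1 − Λ_q(n,1)/n²) = qγ/3; equivalently, Λ_q(n,1) = n² (1 − (qγ/3) n^{1−β} + o(n^{1−β})) as n → ∞. (Multiplying by q!, this is the second-order expansion Var S_{n,1}(H_q) = q! n² (1 − (qγ/3) n^{1−β} + o(n^{1−β})) of the variance of the additive functional of the Hermite polynomial H_q along the stationary Gaussian AR(1) array with parameter α_n.) -/

import Mathlib

open Filter

lemma pow_ub (ε : ℝ) (h0 : 0 ≤ ε) (h1 : ε ≤ 1) (k : ℕ) :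
    (1 - ε) ^ k ≤ 1 - k * ε + k * (k - 1) / 2 * ε ^ 2 := by
  induction k with
  | zero => norm_num
  | succ k ih =>
    have h2 : (1 - ε) ^ (k+1) = (1 - ε) * (1 - ε)^k := by ring
    have h3 : (1 - ε) * (1 - ε)^k ≤ (1 - ε) * (1 - k * ε + k * (k - 1) / 2 * ε ^ 2) :=
      mul_le_mul_of_nonneg_left ih (by linarith)
    have ht : 0 ≤ (k:ℝ) * ((k:ℝ) - 1) * ε ^ 3 := by
      rcases Nat.eq_zero_or_pos k with hk | hk
      · simp [hk]
      · have h4 : (1:ℝ) ≤ (k:ℝ) := by exact_mod_cast hk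
        have h5 : (0:ℝ) ≤ ε ^ 3 := by positivity
        exact mul_nonneg (mul_nonneg (Nat.cast_nonneg k) (by linarith)) h5
    push_cast
    nlinarith [h3, ht]

lemma pow_lb (ε : ℝ) (h1 : ε ≤ 2) (k : ℕ) : 1 - k * ε ≤ (1 - ε) ^ k := by
  have := one_add_mul_le_pow (a := -ε) (by linarith) k
  rw [← sub_eq_add_neg] at this
  calc (1:ℝ) - k * ε = 1 + k * (-ε) := by ring
    _ ≤ _ := this

lemma gauss_icc (m : ℕ) : ∑ i ∈ Finset.Icc 1 m, (i:ℝ) = m * (m+1) / 2 := by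
  induction m with
  | zero => simp
  | succ m ih =>
    rw [Finset.sum_Icc_succ_top (by omega), ih]
    push_cast; ring

lemma key_sum (m : ℕ) : ∑ i ∈ Finset.Icc 1 m, ((m:ℝ) + 1 - i) = m * (m+1) / 2 := by
  rw [Finset.sum_sub_distrib, gauss_icc, Finset.sum_const, Nat.card_Icc]
  simp; ring

lemma S1_id (n : ℕ) :
    ∑ i ∈ Finset.Icc 1 n, ∑ j ∈ Finset.Icc 1 n, (Nat.dist i j : ℝ)
      = ((n:ℝ)^3 - n) / 3 := by
  induction n with
  | zero => simp
  | succ n ih =>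
    have hrow : ∑ i ∈ Finset.Icc 1 n, (Nat.dist i (n+1) : ℝ) = n * (n+1) / 2 := by
      rw [← key_sum n]
      refine Finset.sum_congr rfl fun i hi => ?_
      have hi' : i ≤ n + 1 := by
        have := (Finset.mem_Icc.mp hi).2; omega
      rw [Nat.dist_eq_sub_of_le hi', Nat.cast_sub hi']
      push_cast; ring
    simp only [Finset.sum_Icc_succ_top (show 1 ≤ n+1 by omega)]
    rw [Finset.sum_add_distrib, ih, hrow]
    have hcol : ∑ j ∈ Finset.Icc 1 n, (Nat.dist (n+1) j : ℝ) = n * (n+1) / 2 := by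
      rw [← hrow]
      exact Finset.sum_congr rfl fun j _ => by rw [Nat.dist_comm]
    rw [hcol, Nat.dist_self]
    push_cast; ring

set_option maxHeartbeats 1000000 in
lemma main_bounds (q : ℕ) (γ β : ℝ) (hγ0 : 0 < γ) (hγ1 : γ < 1) (hβ : 1 < β)
    (n : ℕ) (hn : 1 ≤ n) :
    ((γ * ∑ k ∈ Finset.range q, (1 - γ/(n:ℝ)^β)^k) * (((n:ℝ)^3 - n)/(3*(n:ℝ)^3))
        - (γ * ∑ k ∈ Finset.range q, (1 - γ/(n:ℝ)^β)^k)^2 * (n:ℝ)^((1:ℝ)-β)/2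
      ≤ (n:ℝ)^(β-1) * (1 - (∑ i ∈ Finset.Icc 1 n, ∑ j ∈ Finset.Icc 1 n,
          (1 - γ/(n:ℝ)^β)^(q * Nat.dist i j))/(n:ℝ)^2))
    ∧ (n:ℝ)^(β-1) * (1 - (∑ i ∈ Finset.Icc 1 n, ∑ j ∈ Finset.Icc 1 n,
          (1 - γ/(n:ℝ)^β)^(q * Nat.dist i j))/(n:ℝ)^2)
      ≤ (γ * ∑ k ∈ Finset.range q, (1 - γ/(n:ℝ)^β)^k) * (((n:ℝ)^3 - n)/(3*(n:ℝ)^3)) := by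
  have hn0 : (0:ℝ) < (n:ℝ) := by exact_mod_cast hn
  have hA1 : (1:ℝ) ≤ (n:ℝ)^β := Real.one_le_rpow (by exact_mod_cast hn) (by linarith)
  have hA0 : (0:ℝ) < (n:ℝ)^β := by linarith
  have ht0 : 0 ≤ γ/(n:ℝ)^β := div_nonneg hγ0.le hA0.le
  have ht1 : γ/(n:ℝ)^β ≤ γ := div_le_self hγ0.le hA1
  set α : ℝ := 1 - γ/(n:ℝ)^β with hα
  have hα0 : 0 ≤ α := by simp only [hα]; linarith
  have hα1 : α ≤ 1 := by simp only [hα]; linarith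
  set E : ℝ := 1 - α^q with hEdef
  have hE0 : 0 ≤ E := by have := pow_le_one₀ hα0 hα1 (n := q); simp only [hEdef]; linarith
  have hE1 : E ≤ 1 := by have := pow_nonneg hα0 q; simp only [hEdef]; linarith
  -- A * E = F
  set F : ℝ := γ * ∑ k ∈ Finset.range q, α^k with hFdef
  have hFE : F = (n:ℝ)^β * E := by
    have hg : E = (∑ k ∈ Finset.range q, α^k) * (γ/(n:ℝ)^β) := by
      have h := geom_sum_mul α q
      have hα' : α - 1 = -(γ/(n:ℝ)^β) := by rw [hα]; ring
      rw [hEdef]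
      linear_combination h - (∑ k ∈ Finset.range q, α^k) * hα' 
    rw [hg, hFdef]
    field_simp
  -- rpow identities
  have hPA : (n:ℝ)^(β-1) * (n:ℝ) = (n:ℝ)^β := by
    have : (n:ℝ)^(β-1) * (n:ℝ)^(1:ℝ) = (n:ℝ)^(β-1+1) := (Real.rpow_add hn0 _ _).symm
    simpa [Real.rpow_one] using this.trans (by norm_num)
  have h1β : (n:ℝ)^((1:ℝ)-β) * (n:ℝ)^β = (n:ℝ) := by
    have : (n:ℝ)^((1:ℝ)-β) * (n:ℝ)^β = (n:ℝ)^((1:ℝ)-β+β) := (Real.rpow_add hn0 _ _).symm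
    simpa [Real.rpow_one] using this.trans (by norm_num)
  have hQ0 : 0 ≤ (n:ℝ)^(β-1) := Real.rpow_nonneg hn0.le _
  -- sums
  set Λ : ℝ := ∑ i ∈ Finset.Icc 1 n, ∑ j ∈ Finset.Icc 1 n, α^(q * Nat.dist i j) with hΛdef
  have hΛeq : Λ = ∑ i ∈ Finset.Icc 1 n, ∑ j ∈ Finset.Icc 1 n, (1-E)^(Nat.dist i j) := by
    simp only [hΛdef, pow_mul, hEdef, sub_sub_cancel]
  have hdist : ∀ i ∈ Finset.Icc 1 n, ∀ j ∈ Finset.Icc 1 n, (Nat.dist i j : ℝ) ≤ n := by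
    intro i hi j hj
    have hi' := Finset.mem_Icc.mp hi
    have hj' := Finset.mem_Icc.mp hj
    have : Nat.dist i j ≤ n := by simp [Nat.dist]; omega
    exact_mod_cast this
  have hconst : ∑ i ∈ Finset.Icc 1 n, ∑ j ∈ Finset.Icc 1 n,
      (1 - (Nat.dist i j:ℝ)*E) = (n:ℝ)^2 - E*(((n:ℝ)^3 - n)/3) := by
    simp only [Finset.sum_sub_distrib, Finset.sum_const, Nat.card_Icc,
      Nat.add_sub_cancel, nsmul_eq_mul, ← Finset.sum_mul]
    rw [show (∑ i ∈ Finset.Icc 1 n, ∑ j ∈ Finset.Icc 1 n, (Nat.dist i j : ℝ))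
        = ((n:ℝ)^3 - n)/3 from S1_id n]
    push_cast; ring
  have hΛlb : (n:ℝ)^2 - E*(((n:ℝ)^3 - n)/3) ≤ Λ := by
    rw [hΛeq, ← hconst]
    refine Finset.sum_le_sum fun i hi => Finset.sum_le_sum fun j hj => ?_
    exact pow_lb E (by linarith) _
  have hΛub : Λ ≤ (n:ℝ)^2 - E*(((n:ℝ)^3 - n)/3) + (n:ℝ)^4*E^2/2 := by
    have step : Λ ≤ ∑ i ∈ Finset.Icc 1 n, ∑ j ∈ Finset.Icc 1 n,
        (1 - (Nat.dist i j:ℝ)*E + (n:ℝ)^2*E^2/2) := by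
      rw [hΛeq]
      refine Finset.sum_le_sum fun i hi => Finset.sum_le_sum fun j hj => ?_
      refine (pow_ub E hE0 hE1 _).trans ?_
      have hd := hdist i hi j hj
      have hd0 : (0:ℝ) ≤ (Nat.dist i j : ℝ) := Nat.cast_nonneg _
      have hdd : (Nat.dist i j : ℝ) * ((Nat.dist i j : ℝ) - 1) ≤ (n:ℝ)^2 := by
        nlinarith [mul_nonneg hd0 (sub_nonneg.mpr hd), mul_le_mul_of_nonneg_left hd hn0.le]
      have h6 : ((Nat.dist i j : ℝ) * ((Nat.dist i j : ℝ) - 1))*E^2 ≤ (n:ℝ)^2*E^2 :=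
        mul_le_mul_of_nonneg_right hdd (sq_nonneg E)
      nlinarith [h6]
    refine step.trans (le_of_eq ?_)
    simp only [Finset.sum_add_distrib, hconst, Finset.sum_const, Nat.card_Icc,
      Nat.add_sub_cancel, nsmul_eq_mul]
    push_cast; ring
  -- divide by n^2
  have h2 : (0:ℝ) < (n:ℝ)^2 := by positivity
  have hub : 1 - Λ/(n:ℝ)^2 ≤ E*(((n:ℝ)^3 - n)/3)/(n:ℝ)^2 := by
    have := (div_le_div_iff_of_pos_right h2).mpr hΛlb
    have heq : ((n:ℝ)^2 - E*(((n:ℝ)^3 - n)/3))/(n:ℝ)^2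
        = 1 - E*(((n:ℝ)^3 - n)/3)/(n:ℝ)^2 := by field_simp
    rw [heq] at this
    linarith
  have hlb : E*(((n:ℝ)^3 - n)/3)/(n:ℝ)^2 - (n:ℝ)^2*E^2/2 ≤ 1 - Λ/(n:ℝ)^2 := by
    have := (div_le_div_iff_of_pos_right h2).mpr hΛub
    have heq : ((n:ℝ)^2 - E*(((n:ℝ)^3 - n)/3) + (n:ℝ)^4*E^2/2)/(n:ℝ)^2
        = 1 - E*(((n:ℝ)^3 - n)/3)/(n:ℝ)^2 + (n:ℝ)^2*E^2/2 := by field_simp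
    rw [heq] at this
    linarith
  constructor
  · -- lower bound
    have heq : F * (((n:ℝ)^3 - n)/(3*(n:ℝ)^3)) - F^2 * (n:ℝ)^((1:ℝ)-β)/2
        = (n:ℝ)^(β-1) * (E*(((n:ℝ)^3 - n)/3)/(n:ℝ)^2 - (n:ℝ)^2*E^2/2) := by
      rw [hFE]
      have hA : (n:ℝ)^β = (n:ℝ)^(β-1) * (n:ℝ) := hPA.symm
      have hB : (n:ℝ)^((1:ℝ)-β) = (n:ℝ) / (n:ℝ)^β := by
        field_simp [h1β]
        exact h1β
      rw [hB, hA]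
      field_simp
    rw [heq]
    exact mul_le_mul_of_nonneg_left hlb hQ0
  · -- upper bound
    have heq : F * (((n:ℝ)^3 - n)/(3*(n:ℝ)^3))
        = (n:ℝ)^(β-1) * (E*(((n:ℝ)^3 - n)/3)/(n:ℝ)^2) := by
      rw [hFE, ← hPA]
      field_simp
    rw [heq]
    exact mul_le_mul_of_nonneg_left hub hQ0


/-- For `β > 1` and `α_n = 1 − γ/n^β`, with `Λ_q(n,1) = ∑_{i,j=1}^n α_n^{q|i−j|}`,
one has `n^{β−1}(1 − Λ_q(n,1)/n²) → qγ/3`, i.e. the second-order variance expansion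
`Λ_q(n,1) = n²(1 − (qγ/3) n^{1−β} + o(n^{1−β}))`. -/
theorem stmt_7 (q : ℕ) (hq : 1 ≤ q) (γ β : ℝ) (hγ : γ ∈ Set.Ioo (0:ℝ) 1) (hβ : 1 < β) :
    Filter.Tendsto
      (fun n : ℕ => (n : ℝ) ^ (β - 1) *
        (1 - (∑ i ∈ Finset.Icc 1 n, ∑ j ∈ Finset.Icc 1 n,
              (1 - γ / (n : ℝ) ^ β) ^ (q * Nat.dist i j)) / (n : ℝ) ^ 2))
      Filter.atTop (nhds ((q : ℝ) * γ / 3)) := by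
  obtain ⟨hγ0, hγ1⟩ := hγ
  have hb0 : (0:ℝ) < β := by linarith
  have hNb : Tendsto (fun n:ℕ => (n:ℝ)^β) atTop atTop :=
    (tendsto_rpow_atTop hb0).comp tendsto_natCast_atTop_atTop
  have ht : Tendsto (fun n:ℕ => γ/(n:ℝ)^β) atTop (nhds 0) :=
    tendsto_const_nhds.div_atTop hNb
  have hF : Tendsto (fun n:ℕ => γ * ∑ k ∈ Finset.range q, (1 - γ/(n:ℝ)^β)^k)
      atTop (nhds (γ * q)) := by
    have hsum : Tendsto (fun n:ℕ => ∑ k ∈ Finset.range q, (1 - γ/(n:ℝ)^β)^k)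
        atTop (nhds (∑ _k ∈ Finset.range q, (1:ℝ))) := by
      refine tendsto_finset_sum _ (fun k _ => ?_)
      have h1 : Tendsto (fun n:ℕ => 1 - γ/(n:ℝ)^β) atTop (nhds 1) := by
        simpa using tendsto_const_nhds.sub ht
      simpa using h1.pow k
    have := hsum.const_mul γ
    simpa using this
  have hinv : Tendsto (fun n:ℕ => ((n:ℝ))⁻¹) atTop (nhds 0) :=
    tendsto_inv_atTop_zero.comp tendsto_natCast_atTop_atTop
  have hcube : Tendsto (fun n:ℕ => ((n:ℝ)^3 - n)/(3*(n:ℝ)^3)) atTop (nhds (1/3)) := by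
    have h1 : Tendsto (fun n:ℕ => (1 - ((n:ℝ)⁻¹)^2)/3) atTop (nhds ((1 - 0^2)/3)) :=
      (tendsto_const_nhds.sub (hinv.pow 2)).div_const 3
    norm_num at h1
    refine h1.congr' ?_
    filter_upwards [eventually_ge_atTop 1] with n hn
    have hn0 : (0:ℝ) < n := by exact_mod_cast hn
    field_simp
  have h1β : Tendsto (fun n:ℕ => (n:ℝ)^((1:ℝ)-β)) atTop (nhds 0) := by
    have := (tendsto_rpow_neg_atTop (show 0 < β - 1 by linarith)).comp
      tendsto_natCast_atTop_atTop
    simpa [neg_sub, Function.comp_def] using this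
  have hL : Tendsto (fun n:ℕ => (γ * ∑ k ∈ Finset.range q, (1 - γ/(n:ℝ)^β)^k)
        * (((n:ℝ)^3 - n)/(3*(n:ℝ)^3))
      - (γ * ∑ k ∈ Finset.range q, (1 - γ/(n:ℝ)^β)^k)^2 * (n:ℝ)^((1:ℝ)-β)/2)
      atTop (nhds ((q:ℝ) * γ / 3)) := by
    have h' := (hF.mul hcube).sub (((hF.pow 2).mul h1β).div_const 2)
    have : (q:ℝ)*γ/3 = γ*(q:ℝ)*(1/3) - (γ*(q:ℝ))^2*0/2 := by ring
    rw [this]; exact h'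
  have hU : Tendsto (fun n:ℕ => (γ * ∑ k ∈ Finset.range q, (1 - γ/(n:ℝ)^β)^k)
        * (((n:ℝ)^3 - n)/(3*(n:ℝ)^3))) atTop (nhds ((q:ℝ) * γ / 3)) := by
    have h' := hF.mul hcube
    have : (q:ℝ)*γ/3 = γ*(q:ℝ)*(1/3) := by ring
    rw [this]; exact h'
  refine tendsto_of_tendsto_of_tendsto_of_le_of_le' hL hU ?_ ?_
  · filter_upwards [eventually_ge_atTop 1] with n hn
    exact (main_bounds q γ β hγ0 hγ1 hβ n hn).1
  · filter_upwards [eventually_ge_atTop 1] with n hn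
    exact (main_bounds q γ β hγ0 hγ1 hβ n hn).2
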